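/- Let P = diag(−1, −1, 1), let A : [0,T] → M₃(ℝ) and λ : [0,T] → ℝ be continuous, and suppose that for every t ∈ [0,T] the symmetric matrix P·A(t) + A(t)ᵀ·P + λ(t)·P is negative definite. Let v : [0,T] → ℝ³ be differentiable with v'(t) = A(t)v(t), v(0) ≠ 0, and ⟨Pv(0), v(0)⟩ ≤ 0. Then ⟨Pv(t), v(t)⟩ < 0 for every t ∈ (0,T]. -/

import Mathlib

open Matrix

noncomputable section

/-- `P = diag(−1, −1, 1)`. -/
def P : Matrix (Fin 3) (Fin 3) ℝ := Matrix.diagonal ![-1, -1, 1]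

lemma hasDerivAt_quad (M : Matrix (Fin 3) (Fin 3) ℝ) (v : ℝ → Fin 3 → ℝ)
    (w : Fin 3 → ℝ) (t : ℝ) (hv : HasDerivAt v w t) :
    HasDerivAt (fun s => dotProduct (M.mulVec (v s)) (v s))
      (dotProduct (M.mulVec w) (v t) + dotProduct (M.mulVec (v t)) w) t := by
  have hvi : ∀ i, HasDerivAt (fun s => v s i) (w i) t := hasDerivAt_pi.1 hv
  have : ∀ i, HasDerivAt (fun s => (M.mulVec (v s)) i * v s i)
      ((M.mulVec w) i * v t i + (M.mulVec (v t)) i * w i) t := by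
    intro i
    have h1 : HasDerivAt (fun s => (M.mulVec (v s)) i) ((M.mulVec w) i) t := by
      simp only [Matrix.mulVec, dotProduct]
      exact HasDerivAt.fun_sum (fun j _ => (hvi j).const_mul (M i j))
    exact h1.mul (hvi i)
  have := HasDerivAt.fun_sum (fun i (_ : i ∈ Finset.univ) => this i)
  simpa [dotProduct, Finset.sum_add_distrib] using this

lemma quad_algebra (M A : Matrix (Fin 3) (Fin 3) ℝ) (lam : ℝ) (x : Fin 3 → ℝ) :
    dotProduct (M.mulVec (A.mulVec x)) x + dotProduct (M.mulVec x) (A.mulVec x)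
      + lam * dotProduct (M.mulVec x) x
      = dotProduct ((M * A + Aᵀ * M + lam • M).mulVec x) x := by
  simp [dotProduct, Matrix.mulVec, Matrix.mul_apply, Matrix.add_apply,
    Matrix.transpose_apply, Fin.sum_univ_three, Matrix.smul_apply, smul_eq_mul]
  ring

/-- quadratic Lyapunov function argument. If
`P·A(t) + A(t)ᵀ·P + λ(t)·P` is negative definite for all `t ∈ [0,T]`, and `v`
solves `v' = A(t)v` with `v(0) ≠ 0`, `⟨Pv(0), v(0)⟩ ≤ 0`, then
`⟨Pv(t), v(t)⟩ < 0` for `t ∈ (0,T]`. -/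
theorem stmt15 (T : ℝ) (A : ℝ → Matrix (Fin 3) (Fin 3) ℝ) (lam : ℝ → ℝ)
    (hA : ContinuousOn A (Set.Icc 0 T)) (hlam : ContinuousOn lam (Set.Icc 0 T))
    (hneg : ∀ t ∈ Set.Icc (0:ℝ) T, ∀ u : Fin 3 → ℝ, u ≠ 0 →
      dotProduct ((P * A t + (A t)ᵀ * P + lam t • P).mulVec u) u < 0)
    (v : ℝ → Fin 3 → ℝ)
    (hv : ∀ t ∈ Set.Icc (0:ℝ) T, HasDerivAt v ((A t).mulVec (v t)) t)
    (hv0 : v 0 ≠ 0)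
    (hc : dotProduct (P.mulVec (v 0)) (v 0) ≤ 0) :
    ∀ t ∈ Set.Ioc (0:ℝ) T, dotProduct (P.mulVec (v t)) (v t) < 0 := by
  rintro t₁ ⟨ht₁0, ht₁T⟩
  have hT : (0:ℝ) ≤ T := le_trans ht₁0.le ht₁T
  have h0mem : (0:ℝ) ∈ Set.Icc (0:ℝ) T := ⟨le_refl 0, hT⟩
  -- continuous extension of lam
  set μ : ℝ → ℝ := fun s => lam (Set.projIcc 0 T hT s) with hμdef
  have hμcont : Continuous μ := by
    have := hlam.comp_continuous (continuous_subtype_val.comp continuous_projIcc)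
      (fun x => (Set.projIcc 0 T hT x).2)
    simpa [hμdef, Function.comp_def] using this
  have hμeq : ∀ s ∈ Set.Icc (0:ℝ) T, μ s = lam s := by
    intro s hs; simp [hμdef, Set.projIcc_of_mem hT hs]
  -- the exponential integrating factor
  set E : ℝ → ℝ := fun s => Real.exp (∫ u in (0:ℝ)..s, μ u) with hEdef
  have hEpos : ∀ s, 0 < E s := fun s => Real.exp_pos _
  have hE0 : E 0 = 1 := by simp [hEdef]
  have hEderiv : ∀ s, HasDerivAt E (μ s * E s) s := by
    intro s
    have hint : HasDerivAt (fun r => ∫ u in (0:ℝ)..r, μ u) (μ s) s :=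
      (hμcont.integral_hasStrictDerivAt 0 s).hasDerivAt
    simpa [hEdef, mul_comm] using (hint.exp)
  -- Q and R
  set Q : ℝ → ℝ := fun s => dotProduct (P.mulVec (v s)) (v s) with hQdef
  set R : ℝ → ℝ := fun s => Q s * E s with hRdef
  have hRderiv : ∀ s ∈ Set.Icc (0:ℝ) T,
      HasDerivAt R (E s * dotProduct
        ((P * A s + (A s)ᵀ * P + lam s • P).mulVec (v s)) (v s)) s := by
    intro s hs
    have hQ' := hasDerivAt_quad P v ((A s).mulVec (v s)) s (hv s hs)
    have := hQ'.mul (hEderiv s)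
    have key := this
    rw [hμeq s hs] at key
    convert key using 1
    · rfl
    · rfl
    · rfl
    rw [← quad_algebra P (A s) (lam s) (v s)]
    simp [hQdef, Matrix.mulVec_mulVec]
    ring
  have hRderiv_nonpos : ∀ s ∈ Set.Icc (0:ℝ) T,
      E s * dotProduct ((P * A s + (A s)ᵀ * P + lam s • P).mulVec (v s)) (v s) ≤ 0 := by
    intro s hs
    rcases eq_or_ne (v s) 0 with h | h
    · simp [h]
    · exact le_of_lt (mul_neg_of_pos_of_neg (hEpos s) (hneg s hs _ h))
  -- R is antitone on [0,T]
  have hRcont : ContinuousOn R (Set.Icc 0 T) :=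
    fun s hs => ((hRderiv s hs).continuousAt).continuousWithinAt
  have hRanti : AntitoneOn R (Set.Icc 0 T) := by
    apply antitoneOn_of_deriv_nonpos (convex_Icc 0 T) hRcont
    · intro s hs
      rw [interior_Icc] at hs
      exact (hRderiv s ⟨hs.1.le, hs.2.le⟩).differentiableAt.differentiableWithinAt
    · intro s hs
      rw [interior_Icc] at hs
      rw [(hRderiv s ⟨hs.1.le, hs.2.le⟩).deriv]
      exact hRderiv_nonpos s ⟨hs.1.le, hs.2.le⟩
  have ht₁mem : t₁ ∈ Set.Icc (0:ℝ) T := ⟨ht₁0.le, ht₁T⟩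
  -- conclude
  by_contra hcon
  push_neg at hcon
  have hQt₁ : 0 ≤ Q t₁ := hcon
  have hRt₁ : 0 ≤ R t₁ := mul_nonneg hQt₁ (hEpos t₁).le
  have hR0 : R 0 ≤ 0 := by
    rw [hRdef]; simp only [hE0, mul_one]; exact hc
  have hR10 : R t₁ ≤ R 0 := hRanti h0mem ht₁mem ht₁0.le
  have hR0eq : R 0 = 0 := le_antisymm hR0 (le_trans hRt₁ hR10)
  have hRzero : ∀ s ∈ Set.Icc (0:ℝ) t₁, R s = 0 := by
    intro s hs
    have hsmem : s ∈ Set.Icc (0:ℝ) T := ⟨hs.1, le_trans hs.2 ht₁T⟩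
    have h1 : R s ≤ R 0 := hRanti h0mem hsmem hs.1
    have h2 : R t₁ ≤ R s := hRanti hsmem ht₁mem hs.2
    linarith [le_trans hRt₁ h2, h1.trans_eq hR0eq]
  -- derivative of R at 0 is strictly negative, contradiction
  have hr0 : HasDerivAt R (E 0 * dotProduct
      ((P * A 0 + (A 0)ᵀ * P + lam 0 • P).mulVec (v 0)) (v 0)) 0 :=
    hRderiv 0 h0mem
  have hrneg : E 0 * dotProduct
      ((P * A 0 + (A 0)ᵀ * P + lam 0 • P).mulVec (v 0)) (v 0) < 0 :=
    mul_neg_of_pos_of_neg (hEpos 0) (hneg 0 h0mem _ hv0)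
  have hud : UniqueDiffWithinAt ℝ (Set.Icc (0:ℝ) t₁) 0 :=
    (uniqueDiffOn_Icc ht₁0) 0 ⟨le_refl 0, ht₁0.le⟩
  have hzero' : HasDerivWithinAt R 0 (Set.Icc (0:ℝ) t₁) 0 := by
    have hconst : HasDerivWithinAt (fun _ : ℝ => (0:ℝ)) 0 (Set.Icc (0:ℝ) t₁) 0 :=
      (hasDerivAt_const 0 (0:ℝ)).hasDerivWithinAt
    exact hconst.congr hRzero (hRzero 0 ⟨le_refl 0, ht₁0.le⟩)
  have heq : E 0 * dotProduct
      ((P * A 0 + (A 0)ᵀ * P + lam 0 • P).mulVec (v 0)) (v 0) = 0 := by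
    rw [← hr0.hasDerivWithinAt.derivWithin hud, hzero'.derivWithin hud]
  linarith
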